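/- Let 0 < D_m < D_n, N > 0, and let x satisfy e^(N/D_n) ≤ x ≤ e^(N/D_m). Then D_n·e^(N/D_n)·x^(D_m/(D_n-D_m)) - D_m·x^(D_n/(D_n-D_m)) ≤ (D_n - D_m)·e^(N/(D_n-D_m)). -/

import Mathlib

theorem stmt_6 (Dm Dn N x : ℝ) (hDm : 0 < Dm) (hDmn : Dm < Dn) (hN : 0 < N)
    (hx1 : Real.exp (N / Dn) ≤ x) (hx2 : x ≤ Real.exp (N / Dm)) :
    Dn * Real.exp (N / Dn) * x ^ (Dm / (Dn - Dm)) - Dm * x ^ (Dn / (Dn - Dm))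
      ≤ (Dn - Dm) * Real.exp (N / (Dn - Dm)) := by
  set a := Real.exp (N / Dn) with ha
  have hd : 0 < Dn - Dm := sub_pos.mpr hDmn
  have hDn : 0 < Dn := hDm.trans hDmn
  have ha0 : 0 < a := Real.exp_pos _
  have hx0 : 0 < x := lt_of_lt_of_le ha0 hx1
  -- rewrite the RHS exponential as a ^ (Dn/(Dn-Dm))
  have hrhs : Real.exp (N / (Dn - Dm)) = a ^ (Dn / (Dn - Dm)) := by
    rw [ha, ← Real.exp_mul]
    congr 1
    field_simp
  -- split exponent Dn/(Dn-Dm) = Dm/(Dn-Dm) + 1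
  have hsplit : x ^ (Dn / (Dn - Dm)) = x ^ (Dm / (Dn - Dm)) * x := by
    have : Dn / (Dn - Dm) = Dm / (Dn - Dm) + 1 := by field_simp; ring
    rw [this, Real.rpow_add hx0, Real.rpow_one]
  rw [hrhs, hsplit]
  have hxp : (0:ℝ) ≤ x ^ (Dm / (Dn - Dm)) := (Real.rpow_pos_of_pos hx0 _).le
  by_cases hcase : Dn * a - Dm * x ≤ 0
  · have h1 : Dn * a * x ^ (Dm / (Dn - Dm)) - Dm * (x ^ (Dm / (Dn - Dm)) * x)
        = x ^ (Dm / (Dn - Dm)) * (Dn * a - Dm * x) := by ring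
    have h2 : x ^ (Dm / (Dn - Dm)) * (Dn * a - Dm * x) ≤ 0 :=
      mul_nonpos_of_nonneg_of_nonpos hxp hcase
    have h3 : (0:ℝ) ≤ (Dn - Dm) * a ^ (Dn / (Dn - Dm)) :=
      (mul_pos hd (Real.rpow_pos_of_pos ha0 _)).le
    linarith [h1 ▸ h2]
  · push_neg at hcase
    set y := (Dn * a - Dm * x) / (Dn - Dm) with hy
    have hy0 : 0 ≤ y := div_nonneg (by linarith) hd.le
    have hamgm : x ^ (Dm / Dn) * y ^ ((Dn - Dm) / Dn) ≤ (Dm / Dn) * x + ((Dn - Dm) / Dn) * y := by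
      exact Real.geom_mean_le_arith_mean2_weighted
        (div_nonneg hDm.le hDn.le) (div_nonneg hd.le hDn.le) hx0.le hy0 (by field_simp; ring)
    have hmean : (Dm / Dn) * x + ((Dn - Dm) / Dn) * y = a := by
      rw [hy]; field_simp; ring
    rw [hmean] at hamgm
    have hpow : (x ^ (Dm / Dn) * y ^ ((Dn - Dm) / Dn)) ^ (Dn / (Dn - Dm))
        ≤ a ^ (Dn / (Dn - Dm)) :=
      Real.rpow_le_rpow (mul_nonneg (Real.rpow_nonneg hx0.le _) (Real.rpow_nonneg hy0 _))
        hamgm (div_nonneg hDn.le hd.le)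
    have hlhs : (x ^ (Dm / Dn) * y ^ ((Dn - Dm) / Dn)) ^ (Dn / (Dn - Dm))
        = x ^ (Dm / (Dn - Dm)) * y := by
      rw [Real.mul_rpow (Real.rpow_nonneg hx0.le _) (Real.rpow_nonneg hy0 _),
        ← Real.rpow_mul hx0.le, ← Real.rpow_mul hy0]
      have e1 : Dm / Dn * (Dn / (Dn - Dm)) = Dm / (Dn - Dm) := by field_simp
      have e2 : (Dn - Dm) / Dn * (Dn / (Dn - Dm)) = 1 := by field_simp
      rw [e1, e2, Real.rpow_one]
    rw [hlhs] at hpow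
    have hyd : (Dn - Dm) * y = Dn * a - Dm * x := by rw [hy]; field_simp
    have key := mul_le_mul_of_nonneg_left hpow hd.le
    have heq : Dn * a * x ^ (Dm / (Dn - Dm)) - Dm * (x ^ (Dm / (Dn - Dm)) * x)
        = (Dn - Dm) * (x ^ (Dm / (Dn - Dm)) * y) := by
      rw [hy]; field_simp
    rw [heq]
    exact key
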